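/- For every real M ≥ 0, the integral ∫_{-π/2}^{π/2} cos θ · |cos²θ - (M²/4)·sin²θ| dθ equals 2·(M²/12 - 2/3 + (4/3)·√(4/(4 + M²))). -/
import Mathlib


open Real

lemma poly_int (a p q : ℝ) :
    ∫ u in p..q, (1 - a ^ 2 * u ^ 2) = (q - p) - a ^ 2 * (q ^ 3 - p ^ 3) / 3 := by
  have h1 : IntervalIntegrable (fun _ : ℝ => (1 : ℝ)) MeasureTheory.volume p q := by
    apply Continuous.intervalIntegrable; continuity
  have h2 : IntervalIntegrable (fun u : ℝ => a ^ 2 * u ^ 2) MeasureTheory.volume p q := by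
    apply Continuous.intervalIntegrable; continuity
  rw [intervalIntegral.integral_sub h1 h2, intervalIntegral.integral_const_mul,
    integral_pow, intervalIntegral.integral_const]
  simp only [smul_eq_mul, mul_one]
  norm_num
  ring

lemma abs_int (a : ℝ) (ha : 1 ≤ a) :
    ∫ u in (-1 : ℝ)..1, |1 - a ^ 2 * u ^ 2| = 2 * (a ^ 2 / 3 - 1) + 8 / (3 * a) := by
  have ha0 : 0 < a := lt_of_lt_of_le one_pos ha
  set c : ℝ := 1 / a with hc
  have hc0 : 0 < c := by positivity
  have hc1 : c ≤ 1 := by rw [hc]; exact div_le_one_of_le₀ ha (le_of_lt ha0)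
  have hint : ∀ p q : ℝ, IntervalIntegrable (fun u => |1 - a ^ 2 * u ^ 2|)
      MeasureTheory.volume p q := by
    intro p q; apply Continuous.intervalIntegrable; continuity
  have split1 := intervalIntegral.integral_add_adjacent_intervals
    (hint (-1) (-c)) (hint (-c) 1)
  have split2 := intervalIntegral.integral_add_adjacent_intervals
    (hint (-c) c) (hint c 1)
  rw [← split1, ← split2]
  have hL : ∫ u in (-1 : ℝ)..(-c), |1 - a ^ 2 * u ^ 2| =
      -∫ u in (-1 : ℝ)..(-c), (1 - a ^ 2 * u ^ 2) := by
    rw [← intervalIntegral.integral_neg]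
    apply intervalIntegral.integral_congr
    intro u hu
    rw [Set.uIcc_of_le (by linarith)] at hu
    have hu1 : -1 ≤ u := hu.1
    have hu2 : u ≤ -c := hu.2
    have hau : a * u ≤ -1 := by
      have := mul_le_mul_of_nonneg_left hu2 (le_of_lt ha0)
      rw [hc] at this
      calc a * u ≤ a * -(1 / a) := by rw [hc] at hu2; nlinarith
        _ = -1 := by field_simp
    have : 1 - a ^ 2 * u ^ 2 ≤ 0 := by nlinarith [sq_nonneg (a * u + 1)]
    simp [abs_of_nonpos this]
  have hR : ∫ u in c..(1 : ℝ), |1 - a ^ 2 * u ^ 2| =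
      -∫ u in c..(1 : ℝ), (1 - a ^ 2 * u ^ 2) := by
    rw [← intervalIntegral.integral_neg]
    apply intervalIntegral.integral_congr
    intro u hu
    rw [Set.uIcc_of_le hc1] at hu
    have hu1 : c ≤ u := hu.1
    have hau : 1 ≤ a * u := by
      calc (1 : ℝ) = a * (1 / a) := by field_simp
        _ ≤ a * u := by nlinarith
    have : 1 - a ^ 2 * u ^ 2 ≤ 0 := by nlinarith [sq_nonneg (a * u - 1)]
    simp [abs_of_nonpos this]
  have hM : ∫ u in (-c)..c, |1 - a ^ 2 * u ^ 2| =
      ∫ u in (-c)..c, (1 - a ^ 2 * u ^ 2) := by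
    apply intervalIntegral.integral_congr
    intro u hu
    rw [Set.uIcc_of_le (by linarith)] at hu
    have hu1 : -c ≤ u := hu.1
    have hu2 : u ≤ c := hu.2
    have : 0 ≤ 1 - a ^ 2 * u ^ 2 := by
      have h1 : a * u ≤ 1 := by
        calc a * u ≤ a * (1 / a) := by nlinarith
          _ = 1 := by field_simp
      have h2 : -1 ≤ a * u := by
        calc -1 = -(a * (1 / a)) := by field_simp
          _ ≤ a * u := by nlinarith
      nlinarith
    exact abs_of_nonneg this
  rw [hL, hR, hM, poly_int, poly_int, poly_int, hc]
  have ha' : a ≠ 0 := ne_of_gt ha0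
  field_simp
  ring

theorem stmt_6 (M : ℝ) (hM : 0 ≤ M) :
    ∫ θ in (-(π / 2))..(π / 2),
        Real.cos θ * |Real.cos θ ^ 2 - (M ^ 2 / 4) * Real.sin θ ^ 2| =
      2 * (M ^ 2 / 12 - 2 / 3 + (4 / 3) * Real.sqrt (4 / (4 + M ^ 2))) := by
  set a : ℝ := Real.sqrt (1 + M ^ 2 / 4) with hadef
  have ha2 : a ^ 2 = 1 + M ^ 2 / 4 := Real.sq_sqrt (by positivity)
  have ha1 : 1 ≤ a := by
    rw [show (1 : ℝ) = Real.sqrt 1 by simp [Real.sqrt_one], hadef]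
    exact Real.sqrt_le_sqrt (by nlinarith)
  have ha0 : 0 < a := lt_of_lt_of_le one_pos ha1
  have hrt : Real.sqrt (4 / (4 + M ^ 2)) = 1 / a := by
    have h4 : (4 : ℝ) / (4 + M ^ 2) = (1 + M ^ 2 / 4)⁻¹ := by
      rw [inv_eq_one_div]
      field_simp
    rw [h4, Real.sqrt_inv, ← hadef, one_div]
  have hsub : (∫ θ in (-(π / 2))..(π / 2),
      Real.cos θ * |Real.cos θ ^ 2 - (M ^ 2 / 4) * Real.sin θ ^ 2|) =
      ∫ u in (-1 : ℝ)..1, |1 - a ^ 2 * u ^ 2| := by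
    have hcomp := intervalIntegral.integral_comp_smul_deriv
      (f := Real.sin) (f' := Real.cos) (g := fun u => |1 - a ^ 2 * u ^ 2|)
      (a := -(π / 2)) (b := π / 2)
      (fun x _ => Real.hasDerivAt_sin x) Real.continuous_cos.continuousOn
      (by continuity)
    simp only [Real.sin_pi_div_two, Real.sin_neg] at hcomp
    rw [← hcomp]
    apply intervalIntegral.integral_congr
    intro θ _
    simp only [smul_eq_mul, Function.comp_apply]
    congr 1
    rw [Real.cos_sq' θ, ha2]
    ring
  rw [hsub, abs_int a ha1, hrt, ha2]
  field_simp
  ring
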